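/- For every finite simple graph H: LIPCO(H) ≤ 5 if and only if for every orbit ψ of H and every S ∈ IS(ψ), the longest induced cycle length of H_S is at most 5, i.e., LICL(H_S) ≤ 5. -/

import Mathlib

open scoped Classical

/-- `ψ` is an orbit of the vertices of `H` under its automorphism group. -/
def IsOrbit {V : Type*} (H : SimpleGraph V) (ψ : Finset V) : Prop :=
  ∃ h : V, ∀ u : V, u ∈ ψ ↔ ∃ σ : H ≃g H, σ h = u

/-- `IS(ψ)`: the nonempty subsets of `ψ` that are independent sets in `H`. -/
noncomputable def indepSubsets {V : Type*} (H : SimpleGraph V) (ψ : Finset V) :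
    Finset (Finset V) :=
  ψ.powerset.filter fun S => S.Nonempty ∧ ∀ a ∈ S, ∀ b ∈ S, ¬ H.Adj a b

/-- `H_S`: the graph obtained from `H` by merging all vertices of `S` into the single
new vertex `none` (playing the role of `h_S`), removing duplicate edges. -/
def mergeGraph {V : Type*} (H : SimpleGraph V) (S : Finset V) :
    SimpleGraph (Option {x : V // x ∉ S}) where
  Adj a b :=
    match a, b with
    | none, none => False
    | none, some y => ∃ s ∈ S, H.Adj s y.1
    | some x, none => ∃ s ∈ S, H.Adj s x.1
    | some x, some y => H.Adj x.1 y.1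
  symm := by
    constructor
    rintro (_ | x) (_ | y) hab
    · exact hab
    · exact hab
    · exact hab
    · exact hab.symm
  loopless := by
    constructor
    rintro (_ | x) hab
    · exact hab
    · exact H.irrefl hab

/-- `VertexHom_{H,h}(v)`: the number of homomorphisms from `H` to `G` mapping `h` to `v`. -/
noncomputable def vertexHom {V W : Type*} (H : SimpleGraph V) (G : SimpleGraph W)
    (h : V) (v : W) : ℕ :=
  Nat.card {φ : H →g G // φ h = v}

/-- `OrbitHom_{H,ψ}(v)`: the number of homomorphisms from `H` to `G` mapping some
vertex of the orbit `ψ` to `v`. -/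
noncomputable def orbitHom {V W : Type*} (H : SimpleGraph V) (G : SimpleGraph W)
    (ψ : Finset V) (v : W) : ℕ :=
  Nat.card {φ : H →g G // ∃ h ∈ ψ, φ h = v}

/-- `Hom(H,G)`: the total number of homomorphisms from `H` to `G`. -/
noncomputable def homCount {V W : Type*} (H : SimpleGraph V) (G : SimpleGraph W) : ℕ :=
  Nat.card (H →g G)

/-- A walk is induced if any two adjacent vertices on it are joined by an edge of the walk. -/
def IsInducedWalk {V : Type*} (H : SimpleGraph V) {u w : V} (p : H.Walk u w) : Prop :=
  ∀ a ∈ p.support, ∀ b ∈ p.support, H.Adj a b → s(a, b) ∈ p.edges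

/-- `LICL(H)`: the length of the longest induced cycle of `H` (0 if there is none). -/
noncomputable def LICL {V : Type*} (H : SimpleGraph V) : ℕ :=
  sSup {n | ∃ (u : V) (c : H.Walk u u), c.IsCycle ∧ IsInducedWalk H c ∧ c.length = n}

/-- `LIPCO(H)`: the length of the longest induced simple path between two vertices
`h, h'` of the same orbit of `H`, where `h` may equal `h'`, forming an induced cycle. -/
noncomputable def LIPCO {V : Type*} (H : SimpleGraph V) : ℕ :=
  sSup ({n | ∃ (h h' : V) (p : H.Walk h h'), h ≠ h' ∧ (∃ σ : H ≃g H, σ h = h') ∧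
          p.IsPath ∧ IsInducedWalk H p ∧ p.length = n} ∪
        {n | ∃ (h : V) (c : H.Walk h h), c.IsCycle ∧ IsInducedWalk H c ∧ c.length = n})

/-- An orientation of a simple graph `G`: each edge receives exactly one direction. -/
structure GraphOrientation {V : Type*} (G : SimpleGraph V) where
  rel : V → V → Prop
  consistent : ∀ u v, G.Adj u v ↔ (rel u v ∨ rel v u)
  antisymm : ∀ u v, rel u v → ¬ rel v u

/-- An orientation is acyclic if the resulting digraph has no directed cycle. -/
def GraphOrientation.IsAcyclic {V : Type*} {G : SimpleGraph V} (O : GraphOrientation G) : Prop :=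
  ∀ v : V, ¬ Relation.TransGen O.rel v v

section Aux

namespace SimpleGraph.Walk

variable {V V' : Type*} {G : SimpleGraph V} {G' : SimpleGraph V'}

/-- Map a walk along a function that preserves adjacency along the edges of the walk. -/
def mapOn (f : V → V') : ∀ {a b : V} (p : G.Walk a b),
    (∀ x y, s(x, y) ∈ p.edges → G'.Adj (f x) (f y)) → G'.Walk (f a) (f b)
  | _, _, nil, _ => nil
  | _, _, cons h p, hf =>
      cons (hf _ _ (by simp)) (p.mapOn f (fun x y hxy => hf x y (by simp [hxy])))

@[simp] lemma support_mapOn (f : V → V') {a b : V} (p : G.Walk a b)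
    (hf : ∀ x y, s(x, y) ∈ p.edges → G'.Adj (f x) (f y)) :
    (p.mapOn f hf).support = p.support.map f := by
  induction p with
  | nil => simp [mapOn]
  | cons h p ih => simp [mapOn, ih]

@[simp] lemma edges_mapOn (f : V → V') {a b : V} (p : G.Walk a b)
    (hf : ∀ x y, s(x, y) ∈ p.edges → G'.Adj (f x) (f y)) :
    (p.mapOn f hf).edges = p.edges.map (Sym2.map f) := by
  induction p with
  | nil => simp [mapOn]
  | cons h p ih => simp [mapOn, ih]

@[simp] lemma length_mapOn (f : V → V') {a b : V} (p : G.Walk a b)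
    (hf : ∀ x y, s(x, y) ∈ p.edges → G'.Adj (f x) (f y)) :
    (p.mapOn f hf).length = p.length := by
  induction p with
  | nil => simp [mapOn]
  | cons h p ih => simp [mapOn, ih]

lemma isPath_start_ne_end {x y : V} {r : G.Walk x y} (hr : r.IsPath) (h : 0 < r.length) :
    x ≠ y := by
  rintro rfl
  cases r with
  | nil => simp at h
  | cons ha q =>
      have := hr.support_nodup
      simp only [support_cons, List.nodup_cons] at this
      exact this.1 q.end_mem_support

lemma mem_support_tail_iff_closed {v : V} {c : G.Walk v v} (hc : ¬ c.Nil) {a : V} :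
    a ∈ c.support.tail ↔ a ∈ c.support := by
  cases c with
  | nil => simp at hc
  | cons h q =>
      simp only [support_cons, List.tail_cons, List.mem_cons]
      constructor
      · exact fun h' => Or.inr h'
      · rintro (rfl | h')
        · exact q.end_mem_support
        · exact h'

lemma length_rotate' [DecidableEq V] {u v : V} (c : G.Walk v v) (h : u ∈ c.support) :
    (c.rotate u h).length = c.length := by
  rw [← length_edges, ← length_edges, (c.rotate_edges u h).perm.length_eq]

lemma isInducedWalk_rotate [DecidableEq V] {u v : V} {c : G.Walk v v} (hc : IsInducedWalk G c)
    (hnil : ¬ c.Nil) (h : u ∈ c.support) : IsInducedWalk G (c.rotate u h) := by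
  have hnil' : ¬ (c.rotate u h).Nil := by
    rw [not_nil_iff_lt_length] at hnil ⊢
    rwa [length_rotate']
  intro a ha b hb hab
  rw [← mem_support_tail_iff_closed hnil', (c.support_rotate u h).mem_iff,
    mem_support_tail_iff_closed hnil] at ha hb
  have := hc a ha b hb hab
  exact ((c.rotate_edges u h).mem_iff).mpr this

/-- Build a cycle from a path by joining both ends to a new vertex. -/
lemma isCycle_cons_concat {x y z : V} {r : G.Walk x y} (hr : r.IsPath) (hz : z ∉ r.support)
    (hxy : x ≠ y) (ha : G.Adj z x) (hb : G.Adj y z) :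
    (Walk.cons ha (r.concat hb)).IsCycle := by
  rw [isCycle_def]
  refine ⟨?_, by simp, ?_⟩
  · rw [isTrail_def]
    simp only [edges_cons, edges_concat, List.concat_eq_append, List.nodup_cons, List.mem_append, List.mem_singleton, List.not_mem_nil, or_false]
    refine ⟨?_, ?_⟩
    · rintro (h1 | h2)
      · exact hz (r.fst_mem_support_of_mem_edges h1)
      · rw [Sym2.eq_iff] at h2
        rcases h2 with ⟨rfl, rfl⟩ | ⟨-, h2b⟩
        · exact hz r.end_mem_support
        · exact hxy h2b
    · rw [List.nodup_append]
      refine ⟨hr.isTrail.edges_nodup, List.nodup_singleton _, ?_⟩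
      intro e he
      simp only [List.mem_singleton]
      rintro _ rfl rfl
      exact hz (r.snd_mem_support_of_mem_edges he)
  · simp only [support_cons, List.tail_cons, support_concat, List.concat_eq_append]
    rw [List.nodup_append]
    exact ⟨hr.support_nodup, List.nodup_singleton _, by
      intro e he
      simp only [List.mem_singleton]
      rintro _ rfl rfl
      exact hz he⟩

lemma isInduced_cons_concat_cycle {x y z : V} {r : G.Walk x y} (hr : IsInducedWalk G r)
    (hz : ∀ b ∈ r.support, G.Adj z b → b = x ∨ b = y)
    (ha : G.Adj z x) (hb : G.Adj y z) :
    IsInducedWalk G (Walk.cons ha (r.concat hb)) := by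
  intro a hA b hB hab
  simp only [support_cons, support_concat, List.concat_eq_append, List.mem_cons, List.mem_append,
    List.mem_singleton, List.not_mem_nil, or_false] at hA hB
  have hmem : ∀ w, (w = z ∨ w ∈ r.support ∨ w = z) → w = z ∨ w ∈ r.support := by
    tauto
  replace hA := hmem a hA
  replace hB := hmem b hB
  simp only [edges_cons, edges_concat, List.concat_eq_append, List.mem_cons, List.mem_append, List.mem_singleton, List.not_mem_nil, or_false]
  rcases hA with rfl | hA
  · rcases hB with rfl | hB
    · exact absurd hab G.irrefl
    · rcases hz b hB hab with rfl | rfl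
      · exact Or.inl rfl
      · exact Or.inr (Or.inr (Sym2.eq_swap))
  · rcases hB with rfl | hB
    · rcases hz a hA hab.symm with rfl | rfl
      · exact Or.inl (Sym2.eq_swap)
      · exact Or.inr (Or.inr rfl)
    · exact Or.inr (Or.inl (hr a hA b hB hab))

lemma isPath_cons_concat {x y z w : V} {r : G.Walk x y} (hr : r.IsPath)
    (hz : z ∉ r.support) (hw : w ∉ r.support) (hzw : z ≠ w)
    (ha : G.Adj z x) (hb : G.Adj y w) :
    (Walk.cons ha (r.concat hb)).IsPath := by
  rw [isPath_def]
  simp only [support_cons, support_concat, List.concat_eq_append, List.nodup_cons, List.mem_append, List.mem_singleton, List.not_mem_nil, or_false]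
  refine ⟨?_, ?_⟩
  · rintro (h1 | rfl)
    · exact hz h1
    · exact hzw rfl
  · rw [List.nodup_append]
    exact ⟨hr.support_nodup, List.nodup_singleton _, by
      intro e he
      simp only [List.mem_singleton]
      rintro _ rfl rfl
      exact hw he⟩

lemma isInduced_cons_concat_path {x y z w : V} {r : G.Walk x y} (hr : IsInducedWalk G r)
    (hzadj : ∀ b ∈ r.support, G.Adj z b → b = x)
    (hwadj : ∀ b ∈ r.support, G.Adj w b → b = y)
    (hnzw : ¬ G.Adj z w)
    (ha : G.Adj z x) (hb : G.Adj y w) :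
    IsInducedWalk G (Walk.cons ha (r.concat hb)) := by
  intro a hA b hB hab
  simp only [support_cons, support_concat, List.concat_eq_append, List.mem_cons, List.mem_append,
    List.mem_singleton, List.not_mem_nil, or_false] at hA hB
  simp only [edges_cons, edges_concat, List.concat_eq_append, List.mem_cons, List.mem_append, List.mem_singleton, List.not_mem_nil, or_false]
  rcases hA with rfl | hA | rfl
  · rcases hB with rfl | hB | rfl
    · exact absurd hab G.irrefl
    · rcases hzadj b hB hab with rfl
      exact Or.inl rfl
    · exact absurd hab hnzw
  · rcases hB with rfl | hB | rfl
    · rcases hzadj a hA hab.symm with rfl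
      exact Or.inl Sym2.eq_swap
    · exact Or.inr (Or.inl (hr a hA b hB hab))
    · rcases hwadj a hA hab.symm with rfl
      exact Or.inr (Or.inr rfl)
  · rcases hB with rfl | hB | rfl
    · exact absurd hab.symm hnzw
    · rcases hwadj b hB hab with rfl
      exact Or.inr (Or.inr Sym2.eq_swap)
    · exact absurd hab G.irrefl

/-- Decompose an induced cycle based at `z` into `z`, a path `r`, and back to `z`. -/
lemma cycle_decomp {z : V} {c : G.Walk z z} (hc : c.IsCycle) (hind : IsInducedWalk G c) :
    ∃ (x y : V) (hx : G.Adj z x) (r : G.Walk x y) (hy : G.Adj y z),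
      c = Walk.cons hx (r.concat hy) ∧ r.IsPath ∧ IsInducedWalk G r ∧ z ∉ r.support ∧
      (∀ b ∈ r.support, G.Adj z b → b = x ∨ b = y) ∧ r.length + 2 = c.length := by
  have h3 := hc.three_le_length
  have hnil : ¬ c.Nil := by rw [not_nil_iff_lt_length]; omega
  obtain ⟨x, hx, q, hcq⟩ := not_nil_iff.mp hnil
  obtain ⟨w1, h1, q1, rfl⟩ := exists_eq_cons_of_ne hx.ne' q
  obtain ⟨y, r, hy, heq⟩ := exists_cons_eq_concat h1 q1
  rw [heq] at hcq
  subst hcq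
  rw [isCycle_def] at hc
  have hnd : r.support.Nodup ∧ z ∉ r.support := by
    have h2 := hc.2.2
    simp only [support_cons, List.tail_cons, support_concat, List.concat_eq_append] at h2
    rw [List.nodup_append] at h2
    exact ⟨h2.1, fun hzs => h2.2.2 z hzs z (by simp) rfl⟩
  have hmemsup : ∀ a : V, a ∈ r.support → a ∈ (Walk.cons hx (r.concat hy)).support := by
    intro a ha
    simp [support_cons, support_concat, List.concat_eq_append, ha]
  have hedges : ∀ u v : V, s(u, v) ∈ (Walk.cons hx (r.concat hy)).edges ↔
      s(u, v) = s(z, x) ∨ s(u, v) ∈ r.edges ∨ s(u, v) = s(y, z) := by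
    intro u v
    simp [edges_cons, edges_concat, List.concat_eq_append]
  refine ⟨x, y, hx, r, hy, rfl, isPath_def _ |>.mpr hnd.1, ?_, hnd.2, ?_, ?_⟩
  · intro a ha b hb hab
    have hm := hind a (hmemsup a ha) b (hmemsup b hb) hab
    rw [hedges] at hm
    rcases hm with hm | hm | hm
    · rw [Sym2.eq_iff] at hm
      rcases hm with ⟨h1, h2⟩ | ⟨h1, h2⟩
      · exact absurd (h1 ▸ ha) hnd.2
      · exact absurd (h2 ▸ hb) hnd.2
    · exact hm
    · rw [Sym2.eq_iff] at hm
      rcases hm with ⟨h1, h2⟩ | ⟨h1, h2⟩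
      · exact absurd (h2 ▸ hb) hnd.2
      · exact absurd (h1 ▸ ha) hnd.2
  · intro b hb hzb
    have hm := hind z (by simp) b (hmemsup b hb) hzb
    rw [hedges] at hm
    rcases hm with hm | hm | hm
    · rw [Sym2.eq_iff] at hm
      rcases hm with ⟨-, h2⟩ | ⟨h1, h2⟩
      · exact Or.inl h2
      · exact absurd (h2 ▸ hb) hnd.2
    · exact absurd (r.fst_mem_support_of_mem_edges hm) hnd.2
    · rw [Sym2.eq_iff] at hm
      rcases hm with ⟨h1, h2⟩ | ⟨-, h2⟩
      · exact absurd (h2 ▸ hb) hnd.2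
      · exact Or.inr h2
  · simp [length_concat]

lemma path_decomp {z w : V} {p : G.Walk z w} (hp : p.IsPath) (hind : IsInducedWalk G p)
    (hlen : 2 ≤ p.length) :
    ∃ (x y : V) (hx : G.Adj z x) (r : G.Walk x y) (hy : G.Adj y w),
      p = Walk.cons hx (r.concat hy) ∧ r.IsPath ∧ IsInducedWalk G r ∧
      z ∉ r.support ∧ w ∉ r.support ∧
      (∀ b ∈ r.support, G.Adj z b → b = x) ∧ (∀ b ∈ r.support, G.Adj w b → b = y) ∧
      r.length + 2 = p.length ∧ ¬ G.Adj z w := by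
  have hzw : z ≠ w := isPath_start_ne_end hp (by omega)
  obtain ⟨x, hx, q, rfl⟩ := exists_eq_cons_of_ne hzw p
  have hq : q.IsPath := hp.of_cons
  have hxw : x ≠ w := isPath_start_ne_end hq (by
    have := length_cons hx q  -- p.length = q.length + 1
    simp only [length_cons] at hlen
    omega)
  obtain ⟨w1, h1, q1, rfl⟩ := exists_eq_cons_of_ne hxw q
  obtain ⟨y, r, hy, heq⟩ := exists_cons_eq_concat h1 q1
  rw [heq] at hp hind ⊢
  have hnd := hp.support_nodup
  simp only [support_cons, support_concat, List.concat_eq_append, List.nodup_cons] at hnd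
  rw [List.nodup_append] at hnd
  have hzr : z ∉ r.support := fun hh => hnd.1 (by simp [hh])
  have hwr : w ∉ r.support := fun hh => hnd.2.2.2 w hh w (by simp) rfl
  have hrnd : r.support.Nodup := hnd.2.1
  have hzney : z ≠ y := fun hh => hzr (hh ▸ r.end_mem_support)
  have hznex : z ≠ x := fun hh => hzr (hh ▸ r.start_mem_support)
  have hwney : w ≠ y := fun hh => hwr (hh ▸ r.end_mem_support)
  have hwnex : w ≠ x := fun hh => hwr (hh ▸ r.start_mem_support)
  have hmemsup : ∀ a : V, a ∈ r.support → a ∈ (Walk.cons hx (r.concat hy)).support := by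
    intro a ha
    simp [support_cons, support_concat, List.concat_eq_append, ha]
  have hedges : ∀ u v : V, s(u, v) ∈ (Walk.cons hx (r.concat hy)).edges ↔
      s(u, v) = s(z, x) ∨ s(u, v) ∈ r.edges ∨ s(u, v) = s(y, w) := by
    intro u v
    simp [edges_cons, edges_concat, List.concat_eq_append]
  refine ⟨x, y, hx, r, hy, rfl, isPath_def _ |>.mpr hrnd, ?_, hzr, hwr, ?_, ?_, ?_, ?_⟩
  · intro a ha b hb hab
    have hm := hind a (hmemsup a ha) b (hmemsup b hb) hab
    rw [hedges] at hm
    rcases hm with hm | hm | hm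
    · rw [Sym2.eq_iff] at hm
      rcases hm with ⟨h1, h2⟩ | ⟨h1, h2⟩
      · exact absurd (h1 ▸ ha) hzr
      · exact absurd (h2 ▸ hb) hzr
    · exact hm
    · rw [Sym2.eq_iff] at hm
      rcases hm with ⟨h1, h2⟩ | ⟨h1, h2⟩
      · exact absurd (h2 ▸ hb) hwr
      · exact absurd (h1 ▸ ha) hwr
  · intro b hb hzb
    have hm := hind z (by simp) b (hmemsup b hb) hzb
    rw [hedges] at hm
    rcases hm with hm | hm | hm
    · rw [Sym2.eq_iff] at hm
      rcases hm with ⟨-, h2⟩ | ⟨h1, h2⟩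
      · exact h2
      · exact absurd h1 hznex
    · exact absurd (r.fst_mem_support_of_mem_edges hm) hzr
    · rw [Sym2.eq_iff] at hm
      rcases hm with ⟨h1, -⟩ | ⟨h1, -⟩
      · exact absurd h1 hzney
      · exact absurd h1 hzw
  · intro b hb hwb
    have hm := hind w (by simp [support_cons, support_concat, List.concat_eq_append])
      b (hmemsup b hb) hwb
    rw [hedges] at hm
    rcases hm with hm | hm | hm
    · rw [Sym2.eq_iff] at hm
      rcases hm with ⟨h1, -⟩ | ⟨h1, -⟩
      · exact absurd h1.symm hzw
      · exact absurd h1 hwnex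
    · exact absurd (r.fst_mem_support_of_mem_edges hm) hwr
    · rw [Sym2.eq_iff] at hm
      rcases hm with ⟨h1, -⟩ | ⟨-, h2⟩
      · exact absurd h1 hwney
      · exact h2
  · simp [length_concat]
  · intro hadj
    have hm := hind z (by simp) w
      (by simp [support_cons, support_concat, List.concat_eq_append]) hadj
    rw [hedges] at hm
    rcases hm with hm | hm | hm
    · rw [Sym2.eq_iff] at hm
      rcases hm with ⟨-, rfl⟩ | ⟨rfl, rfl⟩
      · exact hwnex rfl
      · exact hzw rfl
    · exact hzr (r.fst_mem_support_of_mem_edges hm)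
    · rw [Sym2.eq_iff] at hm
      rcases hm with ⟨rfl, -⟩ | ⟨rfl, -⟩
      · exact hzney rfl
      · exact hzw rfl

end SimpleGraph.Walk

section MergeLemmas

open SimpleGraph Walk

variable {V : Type*} [DecidableEq V] {H : SimpleGraph V} {S : Finset V}

lemma mergeGraph_adj_some_some {x y : {v : V // v ∉ S}} :
    (mergeGraph H S).Adj (some x) (some y) ↔ H.Adj x.1 y.1 := Iff.rfl

lemma mergeGraph_adj_none_some {y : {v : V // v ∉ S}} :
    (mergeGraph H S).Adj none (some y) ↔ ∃ s ∈ S, H.Adj s y.1 := Iff.rfl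

lemma mergeGraph_adj_some_none {x : {v : V // v ∉ S}} :
    (mergeGraph H S).Adj (some x) none ↔ ∃ s ∈ S, H.Adj s x.1 := Iff.rfl

/-- Merge an induced path whose interior avoids `S` into an induced cycle of `H_S`. -/
lemma key_merge {x y : V} (r : H.Walk x y) (hr : r.IsPath) (hindr : IsInducedWalk H r)
    (hxy : x ≠ y) (hS : ∀ b ∈ r.support, b ∉ S)
    (hadj : ∀ s ∈ S, ∀ b ∈ r.support, H.Adj s b → b = x ∨ b = y)
    {s1 s2 : V} (hs1 : s1 ∈ S) (hs1x : H.Adj s1 x) (hs2 : s2 ∈ S) (hs2y : H.Adj s2 y) :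
    ∃ c : (mergeGraph H S).Walk none none, c.IsCycle ∧ IsInducedWalk (mergeGraph H S) c ∧
      c.length = r.length + 2 := by
  have hxS : x ∉ S := hS x r.start_mem_support
  have hyS : y ∉ S := hS y r.end_mem_support
  set f : V → Option {v : V // v ∉ S} := fun b => if hb : b ∈ S then none else some ⟨b, hb⟩
    with hf
  have hfval : ∀ (b : V) (hb : b ∉ S), f b = some ⟨b, hb⟩ := fun b hb => dif_neg hb
  have hedge : ∀ u v, s(u, v) ∈ r.edges → (mergeGraph H S).Adj (f u) (f v) := by
    intro u v he
    have hu := hS u (r.fst_mem_support_of_mem_edges he)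
    have hv := hS v (r.snd_mem_support_of_mem_edges he)
    rw [hfval u hu, hfval v hv]
    exact mergeGraph_adj_some_some.mpr (r.adj_of_mem_edges he)
  set r2 : (mergeGraph H S).Walk (some ⟨x, hxS⟩) (some ⟨y, hyS⟩) :=
    (r.mapOn f hedge).copy (hfval x hxS) (hfval y hyS) with hr2
  have hsup2 : r2.support = r.support.map f := by simp [hr2]
  have hmem2 : ∀ b ∈ r2.support, ∃ (b0 : V) (hb0 : b0 ∈ r.support),
      b = some ⟨b0, hS b0 hb0⟩ := by
    intro b hb
    rw [hsup2, List.mem_map] at hb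
    obtain ⟨b0, hb0, rfl⟩ := hb
    exact ⟨b0, hb0, (hfval b0 (hS b0 hb0)).symm ▸ rfl⟩
  have hr2path : r2.IsPath := by
    rw [isPath_def, hsup2]
    refine hr.support_nodup.map_on ?_
    intro a ha b hb hab
    rw [hfval a (hS a ha), hfval b (hS b hb)] at hab
    simpa using hab
  have hnone : (none : Option {v : V // v ∉ S}) ∉ r2.support := by
    intro hn
    obtain ⟨b0, hb0, hb⟩ := hmem2 none hn
    cases hb
  have hne : (some ⟨x, hxS⟩ : Option {v : V // v ∉ S}) ≠ some ⟨y, hyS⟩ := by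
    simp [hxy]
  have ha : (mergeGraph H S).Adj none (some ⟨x, hxS⟩) :=
    mergeGraph_adj_none_some.mpr ⟨s1, hs1, hs1x⟩
  have hb : (mergeGraph H S).Adj (some ⟨y, hyS⟩) none :=
    mergeGraph_adj_some_none.mpr ⟨s2, hs2, hs2y⟩
  have hr2ind : IsInducedWalk (mergeGraph H S) r2 := by
    intro a hA b hB hab
    obtain ⟨a0, ha0, rfl⟩ := hmem2 a hA
    obtain ⟨b0, hb0, rfl⟩ := hmem2 b hB
    have := hindr a0 ha0 b0 hb0 (mergeGraph_adj_some_some.mp hab)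
    have hE : r2.edges = r.edges.map (Sym2.map f) := by simp [hr2]
    rw [hE, List.mem_map]
    refine ⟨s(a0, b0), this, ?_⟩
    rw [Sym2.map_pair_eq, hfval a0 (hS a0 ha0), hfval b0 (hS b0 hb0)]
  have hz : ∀ b ∈ r2.support, (mergeGraph H S).Adj none b →
      b = some ⟨x, hxS⟩ ∨ b = some ⟨y, hyS⟩ := by
    intro b hB hadjb
    obtain ⟨b0, hb0, rfl⟩ := hmem2 b hB
    obtain ⟨s, hsS, hsb⟩ := mergeGraph_adj_none_some.mp hadjb
    rcases hadj s hsS b0 hb0 hsb with h | h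
    · subst h; exact Or.inl rfl
    · subst h; exact Or.inr rfl
  refine ⟨Walk.cons ha (r2.concat hb), isCycle_cons_concat hr2path hnone hne ha hb,
    isInduced_cons_concat_cycle hr2ind hz ha hb, ?_⟩
  simp [Walk.length_concat, hr2]

/-- Unmerge an induced cycle of `H_S` through the merged vertex into an induced path of `H`. -/
lemma key_unmerge {c : (mergeGraph H S).Walk none none} (hc : c.IsCycle)
    (hind : IsInducedWalk (mergeGraph H S) c) :
    ∃ (x y : V) (r : H.Walk x y) (s1 s2 : V),
      r.IsPath ∧ IsInducedWalk H r ∧ x ≠ y ∧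
      (∀ b ∈ r.support, b ∉ S) ∧
      (∀ s ∈ S, ∀ b ∈ r.support, H.Adj s b → b = x ∨ b = y) ∧
      s1 ∈ S ∧ H.Adj s1 x ∧ s2 ∈ S ∧ H.Adj s2 y ∧ r.length + 2 = c.length := by
  have h3 := hc.three_le_length
  obtain ⟨a, b, hx, r', hy, hceq, hr'path, hr'ind, hznotin, hadj', hlen⟩ := cycle_decomp hc hind
  have hsome : ∀ o ∈ r'.support, ∃ t : {v : V // v ∉ S}, o = some t := by
    intro o ho
    cases o with
    | none => exact absurd ho hznotin
    | some t => exact ⟨t, rfl⟩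
  obtain ⟨xh, rfl⟩ := hsome a r'.start_mem_support
  obtain ⟨yh, rfl⟩ := hsome b r'.end_mem_support
  set g : Option {v : V // v ∉ S} → V := fun o => (o.getD xh).1 with hg
  have hedge : ∀ u v, s(u, v) ∈ r'.edges → H.Adj (g u) (g v) := by
    intro u v he
    obtain ⟨u1, rfl⟩ := hsome u (r'.fst_mem_support_of_mem_edges he)
    obtain ⟨v1, rfl⟩ := hsome v (r'.snd_mem_support_of_mem_edges he)
    exact mergeGraph_adj_some_some.mp (r'.adj_of_mem_edges he)
  set r : H.Walk xh.1 yh.1 := r'.mapOn g hedge with hrdef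
  have hsup : r.support = r'.support.map g := by simp [hrdef]
  have hmem : ∀ b ∈ r.support, ∃ t : {v : V // v ∉ S}, some t ∈ r'.support ∧ t.1 = b := by
    intro b hb
    rw [hsup, List.mem_map] at hb
    obtain ⟨o, ho, rfl⟩ := hb
    obtain ⟨t, rfl⟩ := hsome o ho
    exact ⟨t, ho, rfl⟩
  have hrpath : r.IsPath := by
    rw [isPath_def, hsup]
    refine hr'path.support_nodup.map_on ?_
    intro o1 h1 o2 h2 h12
    obtain ⟨t1, rfl⟩ := hsome o1 h1
    obtain ⟨t2, rfl⟩ := hsome o2 h2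
    simpa [hg, Subtype.ext_iff] using h12
  have hrind : IsInducedWalk H r := by
    intro a0 hA b0 hB hab
    obtain ⟨t1, ht1, rfl⟩ := hmem a0 hA
    obtain ⟨t2, ht2, rfl⟩ := hmem b0 hB
    have := hr'ind (some t1) ht1 (some t2) ht2 (mergeGraph_adj_some_some.mpr hab)
    have hE : r.edges = r'.edges.map (Sym2.map g) := by simp [hrdef]
    rw [hE, List.mem_map]
    exact ⟨s(some t1, some t2), this, by rw [Sym2.map_pair_eq]; simp [hg]⟩
  have hxy : xh.1 ≠ yh.1 := by
    intro hh
    have : (some xh : Option {v : V // v ∉ S}) ≠ some yh :=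
      isPath_start_ne_end hr'path (by omega)
    exact this (by simp [Subtype.ext_iff, hh])
  obtain ⟨s1, hs1, hs1x⟩ := mergeGraph_adj_none_some.mp hx
  obtain ⟨s2, hs2, hs2y⟩ := mergeGraph_adj_some_none.mp hy
  refine ⟨xh.1, yh.1, r, s1, s2, hrpath, hrind, hxy, ?_, ?_, hs1, hs1x, hs2, hs2y, ?_⟩
  · intro b hb
    obtain ⟨t, ht, rfl⟩ := hmem b hb
    exact t.2
  · intro s hsS b hb hsb
    obtain ⟨t, ht, rfl⟩ := hmem b hb
    have hadjn : (mergeGraph H S).Adj none (some t) := mergeGraph_adj_none_some.mpr ⟨s, hsS, hsb⟩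
    rcases hadj' (some t) ht hadjn with h | h
    · exact Or.inl (by injection h with h'; rw [h'])
    · exact Or.inr (by injection h with h'; rw [h'])
  · simp [hrdef]; omega

/-- Unmerge an induced cycle of `H_S` avoiding the merged vertex into an induced cycle of `H`. -/
lemma unmerge_cycle {u : {v : V // v ∉ S}} {c : (mergeGraph H S).Walk (some u) (some u)}
    (hc : c.IsCycle) (hind : IsInducedWalk (mergeGraph H S) c)
    (hnone : (none : Option {v : V // v ∉ S}) ∉ c.support) :
    ∃ c' : H.Walk u.1 u.1, c'.IsCycle ∧ IsInducedWalk H c' ∧ c'.length = c.length := by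
  have h3 := hc.three_le_length
  have hsome : ∀ o ∈ c.support, ∃ t : {v : V // v ∉ S}, o = some t := by
    intro o ho
    cases o with
    | none => exact absurd ho hnone
    | some t => exact ⟨t, rfl⟩
  set g : Option {v : V // v ∉ S} → V := fun o => (o.getD u).1 with hg
  have hedge : ∀ a b, s(a, b) ∈ c.edges → H.Adj (g a) (g b) := by
    intro a b he
    obtain ⟨t1, rfl⟩ := hsome a (c.fst_mem_support_of_mem_edges he)
    obtain ⟨t2, rfl⟩ := hsome b (c.snd_mem_support_of_mem_edges he)
    exact mergeGraph_adj_some_some.mp (c.adj_of_mem_edges he)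
  set c' : H.Walk u.1 u.1 := c.mapOn g hedge with hcdef
  have hsup : c'.support = c.support.map g := by simp [hcdef]
  have hE : c'.edges = c.edges.map (Sym2.map g) := by simp [hcdef]
  have hmem : ∀ b ∈ c'.support, ∃ t : {v : V // v ∉ S}, some t ∈ c.support ∧ t.1 = b := by
    intro b hb
    rw [hsup, List.mem_map] at hb
    obtain ⟨o, ho, rfl⟩ := hb
    obtain ⟨t, rfl⟩ := hsome o ho
    exact ⟨t, ho, rfl⟩
  have hlen : c'.length = c.length := by simp [hcdef]
  refine ⟨c', ?_, ?_, hlen⟩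
  · rw [isCycle_def]
    refine ⟨?_, ?_, ?_⟩
    · rw [isTrail_def, hE]
      refine hc.isTrail.edges_nodup.map_on ?_
      intro e1 he1 e2 he2 h12
      induction e1 using Sym2.ind with
      | _ a1 b1 =>
      induction e2 using Sym2.ind with
      | _ a2 b2 =>
      obtain ⟨t1, rfl⟩ := hsome a1 (c.fst_mem_support_of_mem_edges he1)
      obtain ⟨t2, rfl⟩ := hsome b1 (c.snd_mem_support_of_mem_edges he1)
      obtain ⟨t3, rfl⟩ := hsome a2 (c.fst_mem_support_of_mem_edges he2)
      obtain ⟨t4, rfl⟩ := hsome b2 (c.snd_mem_support_of_mem_edges he2)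
      rw [Sym2.map_pair_eq, Sym2.map_pair_eq, Sym2.eq_iff] at h12
      rw [Sym2.eq_iff]
      rcases h12 with ⟨h1, h2⟩ | ⟨h1, h2⟩
      · exact Or.inl ⟨by simpa [hg, Subtype.ext_iff] using h1, by simpa [hg, Subtype.ext_iff] using h2⟩
      · exact Or.inr ⟨by simpa [hg, Subtype.ext_iff] using h1, by simpa [hg, Subtype.ext_iff] using h2⟩
    · intro hnil
      have : c'.length = 0 := by rw [hnil]; rfl
      omega
    · have hsupeq : c.support = some u :: c.support.tail := c.support_eq_cons
      have : c'.support = u.1 :: (c.support.tail.map g) := by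
        rw [hsup, hsupeq]; rfl
      rw [this, List.tail_cons]
      refine hc.2.map_on ?_
      intro o1 h1 o2 h2 h12
      have h1' : o1 ∈ c.support := by rw [hsupeq]; exact List.mem_cons_of_mem _ h1
      have h2' : o2 ∈ c.support := by rw [hsupeq]; exact List.mem_cons_of_mem _ h2
      obtain ⟨t1, rfl⟩ := hsome o1 h1'
      obtain ⟨t2, rfl⟩ := hsome o2 h2'
      simpa [hg, Subtype.ext_iff] using h12
  · intro a0 hA b0 hB hab
    obtain ⟨t1, ht1, rfl⟩ := hmem a0 hA
    obtain ⟨t2, ht2, rfl⟩ := hmem b0 hB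
    have := hind (some t1) ht1 (some t2) ht2 (mergeGraph_adj_some_some.mpr hab)
    rw [hE, List.mem_map]
    exact ⟨s(some t1, some t2), this, by rw [Sym2.map_pair_eq]; simp [hg]⟩

end MergeLemmas

section Bounds

variable {W : Type*} [Fintype W] {G : SimpleGraph W}

lemma cycle_length_le_card {u : W} {c : G.Walk u u} (hc : c.IsCycle) :
    c.length ≤ Fintype.card W := by
  have h1 := hc.support_nodup.length_le_card
  have h2 := c.length_support
  have h3 : c.support.tail.length = c.support.length - 1 := c.support.length_tail
  omega

lemma bddAbove_lipcoSet (H : SimpleGraph W) :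
    BddAbove ({n | ∃ (h h' : W) (p : H.Walk h h'), h ≠ h' ∧ (∃ σ : H ≃g H, σ h = h') ∧
          p.IsPath ∧ IsInducedWalk H p ∧ p.length = n} ∪
        {n | ∃ (h : W) (c : H.Walk h h), c.IsCycle ∧ IsInducedWalk H c ∧ c.length = n}) := by
  refine ⟨Fintype.card W, ?_⟩
  rintro n (⟨h, h', p, -, -, hp, -, rfl⟩ | ⟨h, c, hc, -, rfl⟩)
  · exact le_of_lt hp.length_lt
  · exact cycle_length_le_card hc

lemma bddAbove_liclSet (G : SimpleGraph W) :
    BddAbove {n | ∃ (u : W) (c : G.Walk u u), c.IsCycle ∧ IsInducedWalk G c ∧ c.length = n} := by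
  refine ⟨Fintype.card W, ?_⟩
  rintro n ⟨u, c, hc, -, rfl⟩
  exact cycle_length_le_card hc

end Bounds


end Aux

/-- `LIPCO(H) ≤ 5` iff for every orbit `ψ` of `H` and every `S ∈ IS(ψ)`,
the longest induced cycle of `H_S` has length at most 5. -/
theorem lipco_le_five_iff_licl_merge_le_five {V : Type*} [Fintype V] [DecidableEq V]
    (H : SimpleGraph V) :
    LIPCO H ≤ 5 ↔
      ∀ ψ : Finset V, IsOrbit H ψ → ∀ S ∈ indepSubsets H ψ,
        LICL (mergeGraph H S) ≤ 5 := by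
  classical
  constructor
  · intro hlip ψ hψ S hS
    simp only [indepSubsets, Finset.mem_filter, Finset.mem_powerset] at hS
    obtain ⟨hSψ, hSne, hSind⟩ := hS
    unfold LICL
    apply csSup_le'
    rintro n ⟨u, c, hc, hind, rfl⟩
    by_contra hgt
    push_neg at hgt
    by_cases hn : (none : Option {x : V // x ∉ S}) ∈ c.support
    · have hnil : ¬ c.Nil := hc.isCircuit.not_nil
      have hc2cyc : (c.rotate none hn).IsCycle := hc.rotate hn
      have hc2ind := SimpleGraph.Walk.isInducedWalk_rotate hind hnil hn
      have hc2len : (c.rotate none hn).length = c.length := SimpleGraph.Walk.length_rotate' c hn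
      obtain ⟨x, y, r, s1, s2, hrpath, hrind, hxy, hrS, hradj, hs1S, hs1x, hs2S, hs2y, hrlen⟩ :=
        key_unmerge hc2cyc hc2ind
      by_cases hboth : ∃ s ∈ S, H.Adj s x ∧ H.Adj s y
      · obtain ⟨s, hsS, hsx, hsy⟩ := hboth
        have hsr : s ∉ r.support := fun hh => hrS s hh hsS
        have hcyc := SimpleGraph.Walk.isCycle_cons_concat hrpath hsr hxy hsx hsy.symm
        have hcycind := SimpleGraph.Walk.isInduced_cons_concat_cycle hrind
          (fun b hb hab => hradj s hsS b hb hab) hsx hsy.symm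
        have hmem : c.length ∈ ({n | ∃ (h h' : V) (p : H.Walk h h'), h ≠ h' ∧
            (∃ σ : H ≃g H, σ h = h') ∧ p.IsPath ∧ IsInducedWalk H p ∧ p.length = n} ∪
            {n | ∃ (h : V) (cc : H.Walk h h), cc.IsCycle ∧ IsInducedWalk H cc ∧
              cc.length = n}) := by
          refine Or.inr ⟨s, SimpleGraph.Walk.cons hsx (r.concat hsy.symm), hcyc, hcycind, ?_⟩
          simp only [SimpleGraph.Walk.length_cons, SimpleGraph.Walk.length_concat]
          omega
        have hle : c.length ≤ LIPCO H := le_csSup (bddAbove_lipcoSet H) hmem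
        omega
      · push_neg at hboth
        have hns1y : ¬ H.Adj s1 y := fun hy' => hboth s1 hs1S hs1x hy'
        have hns2x : ¬ H.Adj s2 x := fun hx' => hboth s2 hs2S hx' hs2y
        have hs12 : s1 ≠ s2 := fun heq => hns1y (heq ▸ hs2y)
        have hnadj : ¬ H.Adj s1 s2 := hSind s1 hs1S s2 hs2S
        have hs1r : s1 ∉ r.support := fun hh => hrS s1 hh hs1S
        have hs2r : s2 ∉ r.support := fun hh => hrS s2 hh hs2S
        have hpp := SimpleGraph.Walk.isPath_cons_concat hrpath hs1r hs2r hs12 hs1x hs2y.symm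
        have hppind := SimpleGraph.Walk.isInduced_cons_concat_path hrind
          (fun b hb hab => (hradj s1 hs1S b hb hab).resolve_right
            (fun he => hns1y (he ▸ hab)))
          (fun b hb hab => (hradj s2 hs2S b hb hab).resolve_left
            (fun he => hns2x (he ▸ hab)))
          hnadj hs1x hs2y.symm
        obtain ⟨h0, hψ'⟩ := hψ
        obtain ⟨σ1, hσ1⟩ := (hψ' s1).mp (hSψ hs1S)
        obtain ⟨σ2, hσ2⟩ := (hψ' s2).mp (hSψ hs2S)
        have hσ : (σ1.symm.trans σ2) s1 = s2 := by
          have h1 : σ1.symm s1 = h0 := by rw [← hσ1, RelIso.symm_apply_apply]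
          show σ2 (σ1.symm s1) = s2
          rw [h1, hσ2]
        have hmem : c.length ∈ ({n | ∃ (h h' : V) (p : H.Walk h h'), h ≠ h' ∧
            (∃ σ : H ≃g H, σ h = h') ∧ p.IsPath ∧ IsInducedWalk H p ∧ p.length = n} ∪
            {n | ∃ (h : V) (cc : H.Walk h h), cc.IsCycle ∧ IsInducedWalk H cc ∧
              cc.length = n}) := by
          refine Or.inl ⟨s1, s2, SimpleGraph.Walk.cons hs1x (r.concat hs2y.symm), hs12,
            ⟨σ1.symm.trans σ2, hσ⟩, hpp, hppind, ?_⟩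
          simp only [SimpleGraph.Walk.length_cons, SimpleGraph.Walk.length_concat]
          omega
        have hle : c.length ≤ LIPCO H := le_csSup (bddAbove_lipcoSet H) hmem
        omega
    · cases u with
      | none => exact absurd c.start_mem_support hn
      | some uh =>
        obtain ⟨c', hc'cyc, hc'ind, hc'len⟩ := unmerge_cycle hc hind hn
        have hmem : c.length ∈ ({n | ∃ (h h' : V) (p : H.Walk h h'), h ≠ h' ∧
            (∃ σ : H ≃g H, σ h = h') ∧ p.IsPath ∧ IsInducedWalk H p ∧ p.length = n} ∪
            {n | ∃ (h : V) (cc : H.Walk h h), cc.IsCycle ∧ IsInducedWalk H cc ∧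
              cc.length = n}) :=
          Or.inr ⟨uh.1, c', hc'cyc, hc'ind, hc'len⟩
        have hle : c.length ≤ LIPCO H := le_csSup (bddAbove_lipcoSet H) hmem
        omega
  · intro hR
    unfold LIPCO
    apply csSup_le'
    rintro n (⟨h, h', p, hne, ⟨σ, hσ⟩, hp, hind, rfl⟩ | ⟨h, c, hc, hind, rfl⟩)
    · by_contra hgt
      push_neg at hgt
      obtain ⟨x, y, hx, r, hy, hpeq, hrpath, hrind, hhr, hh'r, hzadj, hwadj, hrlen, hnadj⟩ :=
        SimpleGraph.Walk.path_decomp hp hind (by omega)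
      set ψ : Finset V := Finset.univ.filter (fun u => ∃ σ : H ≃g H, σ h = u) with hψdef
      have hψorb : IsOrbit H ψ := ⟨h, fun u => by simp [hψdef]⟩
      have hhψ : h ∈ ψ := by
        simp only [hψdef, Finset.mem_filter, Finset.mem_univ, true_and]
        exact ⟨RelIso.refl _, rfl⟩
      have hh'ψ : h' ∈ ψ := by
        simp only [hψdef, Finset.mem_filter, Finset.mem_univ, true_and]
        exact ⟨σ, hσ⟩
      set S : Finset V := {h, h'} with hSdef
      have hSmem : S ∈ indepSubsets H ψ := by
        simp only [indepSubsets, Finset.mem_filter, Finset.mem_powerset]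
        refine ⟨?_, ⟨h, by simp [hSdef]⟩, ?_⟩
        · intro a ha
          simp only [hSdef, Finset.mem_insert, Finset.mem_singleton] at ha
          rcases ha with rfl | rfl
          · exact hhψ
          · exact hh'ψ
        · intro a ha b hb hab
          simp only [hSdef, Finset.mem_insert, Finset.mem_singleton] at ha hb
          rcases ha with rfl | rfl <;> rcases hb with rfl | rfl
          · exact H.irrefl hab
          · exact hnadj hab
          · exact hnadj hab.symm
          · exact H.irrefl hab
      have hxy : x ≠ y := SimpleGraph.Walk.isPath_start_ne_end hrpath (by omega)
      have hSsup : ∀ b ∈ r.support, b ∉ S := by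
        intro b hb hbS
        simp only [hSdef, Finset.mem_insert, Finset.mem_singleton] at hbS
        rcases hbS with rfl | rfl
        · exact hhr hb
        · exact hh'r hb
      have hadjS : ∀ s ∈ S, ∀ b ∈ r.support, H.Adj s b → b = x ∨ b = y := by
        intro s hs b hb hab
        simp only [hSdef, Finset.mem_insert, Finset.mem_singleton] at hs
        rcases hs with rfl | rfl
        · exact Or.inl (hzadj b hb hab)
        · exact Or.inr (hwadj b hb hab)
      obtain ⟨c, hccyc, hcind, hclen⟩ := key_merge r hrpath hrind hxy hSsup hadjS
        (s1 := h) (s2 := h') (by simp [hSdef]) hx (by simp [hSdef]) hy.symm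
      have hmem : p.length ∈ {n | ∃ (u : Option {x : V // x ∉ S})
          (cc : (mergeGraph H S).Walk u u), cc.IsCycle ∧
          IsInducedWalk (mergeGraph H S) cc ∧ cc.length = n} :=
        ⟨none, c, hccyc, hcind, by omega⟩
      have hle : p.length ≤ LICL (mergeGraph H S) := le_csSup (bddAbove_liclSet _) hmem
      have h5 := hR ψ hψorb S hSmem
      omega
    · by_contra hgt
      push_neg at hgt
      obtain ⟨x, y, hx, r, hy, hceq, hrpath, hrind, hhr, hradj, hrlen⟩ :=
        SimpleGraph.Walk.cycle_decomp hc hind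
      set ψ : Finset V := Finset.univ.filter (fun u => ∃ σ : H ≃g H, σ h = u) with hψdef
      have hψorb : IsOrbit H ψ := ⟨h, fun u => by simp [hψdef]⟩
      have hhψ : h ∈ ψ := by
        simp only [hψdef, Finset.mem_filter, Finset.mem_univ, true_and]
        exact ⟨RelIso.refl _, rfl⟩
      set S : Finset V := {h} with hSdef
      have hSmem : S ∈ indepSubsets H ψ := by
        simp only [indepSubsets, Finset.mem_filter, Finset.mem_powerset]
        refine ⟨?_, ⟨h, by simp [hSdef]⟩, ?_⟩
        · intro a ha
          simp only [hSdef, Finset.mem_singleton] at ha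
          subst ha
          exact hhψ
        · intro a ha b hb hab
          simp only [hSdef, Finset.mem_singleton] at ha hb
          subst ha; subst hb
          exact H.irrefl hab
      have hxy : x ≠ y := SimpleGraph.Walk.isPath_start_ne_end hrpath (by omega)
      have hSsup : ∀ b ∈ r.support, b ∉ S := by
        intro b hb hbS
        simp only [hSdef, Finset.mem_singleton] at hbS
        subst hbS
        exact hhr hb
      have hadjS : ∀ s ∈ S, ∀ b ∈ r.support, H.Adj s b → b = x ∨ b = y := by
        intro s hs b hb hab
        simp only [hSdef, Finset.mem_singleton] at hs
        subst hs
        exact hradj b hb hab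
      obtain ⟨cc, hccyc, hcind, hclen⟩ := key_merge r hrpath hrind hxy hSsup hadjS
        (s1 := h) (s2 := h) (by simp [hSdef]) hx (by simp [hSdef]) hy.symm
      have hmem : c.length ∈ {n | ∃ (u : Option {x : V // x ∉ S})
          (cc : (mergeGraph H S).Walk u u), cc.IsCycle ∧
          IsInducedWalk (mergeGraph H S) cc ∧ cc.length = n} :=
        ⟨none, cc, hccyc, hcind, by omega⟩
      have hle : c.length ≤ LICL (mergeGraph H S) := le_csSup (bddAbove_liclSet _) hmem
      have h5 := hR ψ hψorb S hSmem
      omega
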